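/- For every nonnegative integer M and fixed complex a, b, c, Γ(a+n)Γ(b+n)/Γ(c+n) = Σ_{m=0}^{M} (-1)^m (c-a)_m (c-b)_m / m! · Γ(a+b-c-m+n) + O(Γ(a+b-c-M-1+n)) as n → ∞ through the positive integers. -/

import Mathlib

open Complex Filter Asymptotics Polynomial

noncomputable def poch (x : ℂ) (m : ℕ) : ℂ := (ascPochhammer ℂ m).eval x

open Topology
lemma poch_zero (x : ℂ) : poch x 0 = 1 := by simp [poch]

lemma poch_succ (x : ℂ) (k : ℕ) : poch x (k+1) = x * poch (x+1) k := by
  simp [poch, ascPochhammer_succ_left, eval_comp]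

lemma xne {x : ℂ} (hx : 0 < x.re) : x ≠ 0 := by
  intro h; rw [h] at hx; simp at hx

lemma gne {x : ℂ} (hx : 0 < x.re) : Complex.Gamma x ≠ 0 :=
  Complex.Gamma_ne_zero_of_re_pos hx

lemma re_add_nat (x : ℂ) (n : ℕ) : (x + n).re = x.re + n := by
  simp

lemma Gamma_rec {x : ℂ} (hx : 0 < x.re) : Complex.Gamma (x+1) = x * Complex.Gamma x :=
  Complex.Gamma_add_one x (xne hx)

lemma Gamma_shift (x : ℂ) (hx : 0 < x.re) : ∀ k : ℕ,
    Complex.Gamma (x + k) = Complex.Gamma x * ∏ j ∈ Finset.range k, (x + j) := by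
  intro k; induction k with
  | zero => simp
  | succ k ih =>
      have h1 : x + ((k+1 : ℕ) : ℂ) = (x + k) + 1 := by push_cast; ring
      have h2 : 0 < (x + (k:ℂ)).re := by rw [re_add_nat]; positivity
      rw [h1, Gamma_rec h2, ih, Finset.prod_range_succ]; ring

lemma re_le_norm (z : ℂ) : z.re ≤ ‖z‖ := by
  exact Complex.re_le_norm z

lemma norm_add_nat_ge {x : ℂ} (hx : 1 ≤ x.re) (n : ℕ) : ((n:ℝ)+1) ≤ ‖x + n‖ := by
  refine le_trans ?_ (_root_.re_le_norm _)
  rw [re_add_nat]; linarith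

lemma ratio_lb (x : ℂ) (hx : 1 ≤ x.re) (k n : ℕ) :
    ((n:ℝ)+1)^k * ‖Complex.Gamma (x + n)‖ ≤ ‖Complex.Gamma (x + k + n)‖ := by
  have h0 : 0 < (x + (n:ℂ)).re := by rw [re_add_nat]; positivity
  have h1 : x + k + n = (x + n) + k := by push_cast; ring
  rw [h1, Gamma_shift _ h0 k, norm_mul, norm_prod]
  have : ((n:ℝ)+1)^k ≤ ∏ j ∈ Finset.range k, ‖x + n + j‖ := by
    calc ((n:ℝ)+1)^k = ∏ j ∈ Finset.range k, ((n:ℝ)+1) := by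
          rw [Finset.prod_const, Finset.card_range]
      _ ≤ ∏ j ∈ Finset.range k, ‖x + n + j‖ := by
          refine Finset.prod_le_prod (fun j _ => by positivity) (fun j _ => ?_)
          refine le_trans ?_ (_root_.re_le_norm _)
          simp only [Complex.add_re, Complex.natCast_re]
          linarith [(Nat.cast_nonneg j : (0:ℝ) ≤ j)]
  have hn : 0 ≤ ‖Complex.Gamma (x + n)‖ := norm_nonneg _
  calc ((n:ℝ)+1)^k * ‖Complex.Gamma (x + n)‖
      ≤ (∏ j ∈ Finset.range k, ‖x + n + j‖) * ‖Complex.Gamma (x + n)‖ :=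
        mul_le_mul_of_nonneg_right this hn
    _ = ‖Complex.Gamma (x + n)‖ * ∏ j ∈ Finset.range k, ‖x + n + j‖ := by ring

lemma ratio_ub (x : ℂ) (hx : 0 < x.re) (k n : ℕ) :
    ‖Complex.Gamma (x + k + n)‖ ≤ (‖x‖ + k + n)^k * ‖Complex.Gamma (x + n)‖ := by
  have h0 : 0 < (x + (n:ℂ)).re := by rw [re_add_nat]; positivity
  have h1 : x + k + n = (x + n) + k := by push_cast; ring
  rw [h1, Gamma_shift _ h0 k, norm_mul, norm_prod, mul_comm]
  gcongr ?_ * _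
  calc ∏ j ∈ Finset.range k, ‖x + n + j‖ ≤ ∏ j ∈ Finset.range k, (‖x‖ + k + n) := by
        refine Finset.prod_le_prod (fun j _ => norm_nonneg _) (fun j hj => ?_)
        have hj' : (j:ℝ) ≤ k := by
          have := Finset.mem_range.mp hj; exact_mod_cast this.le
        calc ‖x + n + j‖ ≤ ‖x‖ + ‖(n:ℂ)‖ + ‖(j:ℂ)‖ := by
              refine le_trans (norm_add_le _ _) ?_; gcongr; exact norm_add_le _ _
          _ ≤ ‖x‖ + k + n := by
              simp only [Complex.norm_natCast]; linarith
    _ = (‖x‖ + k + n)^k := by rw [Finset.prod_const, Finset.card_range]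

lemma inv_pow_diff (q m : ℕ) (hq : 1 ≤ q) (hm : 1 ≤ m) :
    (q:ℝ) / ((m:ℝ)+1)^(q+1) ≤ 1/(m:ℝ)^q - 1/((m:ℝ)+1)^q := by
  have hm0 : (0:ℝ) < m := by exact_mod_cast hm
  have hm1 : (0:ℝ) < (m:ℝ)+1 := by linarith
  have hb : (m:ℝ)^q + q * (m:ℝ)^(q-1) ≤ ((m:ℝ)+1)^q := by
    have hge : (-2:ℝ) ≤ 1/(m:ℝ) := by
      have : (0:ℝ) ≤ 1/(m:ℝ) := by positivity
      linarith
    have h := one_add_mul_le_pow hge q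
    have h2 : (m:ℝ)^q * (1 + q * (1/(m:ℝ))) ≤ (m:ℝ)^q * (1 + 1/(m:ℝ))^q :=
      mul_le_mul_of_nonneg_left h (by positivity)
    have e1 : (m:ℝ)^q * (1 + 1/(m:ℝ))^q = ((m:ℝ)+1)^q := by
      rw [← mul_pow]; congr 1; field_simp
    have e2 : (m:ℝ)^q * (1 + q * (1/(m:ℝ))) = (m:ℝ)^q + q * (m:ℝ)^(q-1) := by
      have hp : (m:ℝ)^q = (m:ℝ)^(q-1) * m := by
        rw [← pow_succ]; congr 1; omega
      rw [hp]; field_simp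
    rw [e1] at h2; rw [← e2]; exact h2
  have p1 : (m:ℝ)^q = (m:ℝ)^(q-1) * m := by rw [← pow_succ]; congr 1; omega
  have p2 : ((m:ℝ)+1)^(q+1) = ((m:ℝ)+1)^q * ((m:ℝ)+1) := by rw [← pow_succ]
  have e : 1/(m:ℝ)^q - 1/((m:ℝ)+1)^q = (((m:ℝ)+1)^q - (m:ℝ)^q) / ((m:ℝ)^q * ((m:ℝ)+1)^q) := by
    field_simp
  rw [e, div_le_div_iff₀ (by positivity) (by positivity)]
  have hnn : (0:ℝ) ≤ (q:ℝ) * (m:ℝ)^(q-1) := by positivity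
  calc (q:ℝ) * ((m:ℝ)^q * ((m:ℝ)+1)^q) = ((q:ℝ) * (m:ℝ)^(q-1)) * (((m:ℝ)+1)^q * m) := by
        rw [p1]; ring
    _ ≤ ((q:ℝ) * (m:ℝ)^(q-1)) * (((m:ℝ)+1)^q * ((m:ℝ)+1)) := by
        refine mul_le_mul_of_nonneg_left ?_ hnn
        refine mul_le_mul_of_nonneg_left (by linarith) (by positivity)
    _ ≤ (((m:ℝ)+1)^q - (m:ℝ)^q) * (((m:ℝ)+1)^q * ((m:ℝ)+1)) := by
        refine mul_le_mul_of_nonneg_right (by linarith) (by positivity)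
    _ = (((m:ℝ)+1)^q - (m:ℝ)^q) * ((m:ℝ)+1)^(q+1) := by rw [p2]

lemma tail_bound (w : ℕ → ℂ) (L : ℂ) (C : ℝ) (q N : ℕ) (hq : 1 ≤ q) (hC : 0 ≤ C)
    (hstep : ∀ n, N ≤ n → ‖w (n+1) - w n‖ ≤ C / ((n:ℝ)+1)^(q+1))
    (hlim : Tendsto w atTop (𝓝 L)) :
    ∀ n, N ≤ n → 1 ≤ n → ‖w n - L‖ ≤ C / q * (1/(n:ℝ)^q) := by
  intro n hN h1
  have hn0 : (0:ℝ) < n := by exact_mod_cast h1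
  have key : ∀ m, n ≤ m → ‖w m - w n‖ ≤ C/q * (1/(n:ℝ)^q - 1/(m:ℝ)^q) := by
    intro m hm
    induction m, hm using Nat.le_induction with
    | base => simp
    | succ m hm ih =>
        have hm1 : 1 ≤ m := le_trans h1 hm
        have hmN : N ≤ m := le_trans hN hm
        calc ‖w (m+1) - w n‖ ≤ ‖w (m+1) - w m‖ + ‖w m - w n‖ := by
              have := norm_add_le (w (m+1) - w m) (w m - w n)
              simpa using this
          _ ≤ C / ((m:ℝ)+1)^(q+1) + C/q * (1/(n:ℝ)^q - 1/(m:ℝ)^q) := by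
              gcongr
              · exact hstep m hmN
          _ ≤ C/q * (1/(m:ℝ)^q - 1/((m:ℝ)+1)^q) + C/q * (1/(n:ℝ)^q - 1/(m:ℝ)^q) := by
              gcongr
              have h2 := inv_pow_diff q m hq hm1
              have hq0 : (0:ℝ) < q := by exact_mod_cast hq
              calc C / ((m:ℝ)+1)^(q+1) = C/q * ((q:ℝ)/((m:ℝ)+1)^(q+1)) := by
                    field_simp
                _ ≤ C/q * (1/(m:ℝ)^q - 1/((m:ℝ)+1)^q) := by
                    refine mul_le_mul_of_nonneg_left h2 (by positivity)
          _ = C/q * (1/(n:ℝ)^q - 1/(↑(m+1):ℝ)^q) := by push_cast; ring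
  have hlim2 : Tendsto (fun m => ‖w m - w n‖) atTop (𝓝 ‖L - w n‖) :=
    ((hlim.sub tendsto_const_nhds).norm)
  have hbd : ∀ᶠ m in atTop, ‖w m - w n‖ ≤ C/q * (1/(n:ℝ)^q) := by
    filter_upwards [eventually_ge_atTop n, eventually_ge_atTop 1] with m hm hm1
    refine le_trans (key m hm) ?_
    have : (0:ℝ) < (m:ℝ)^q := by
      have : (0:ℝ) < m := by exact_mod_cast hm1
      positivity
    have h3 : 0 ≤ 1/(m:ℝ)^q := by positivity
    refine mul_le_mul_of_nonneg_left (by linarith) (by positivity)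
  have := le_of_tendsto hlim2 hbd
  rwa [norm_sub_rev] at this

lemma coef_step (c a b : ℂ) (k : ℕ) :
    -((k:ℂ)+1) * ((-1)^(k+1) * poch (c-a) (k+1) * poch (c-b) (k+1) / ((k+1).factorial : ℂ))
      = (c-a)*(c-b) * ((-1)^k * poch (c+1-a) k * poch (c+1-b) k / (k.factorial : ℂ)) := by
  have h1 : c+1-a = (c-a)+1 := by ring
  have h2 : c+1-b = (c-b)+1 := by ring
  rw [h1, h2, poch_succ, poch_succ, Nat.factorial_succ, pow_succ]
  have hf : ((k.factorial : ℂ)) ≠ 0 := by exact_mod_cast k.factorial_ne_zero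
  have hk : ((k:ℂ)+1) ≠ 0 := by exact_mod_cast (Nat.cast_ne_zero (R := ℂ)).mpr (Nat.succ_ne_zero k)
  push_cast
  field_simp

lemma re_pos_add {x : ℂ} (hx : 0 < x.re) (n : ℕ) : 0 < (x + (n:ℂ)).re := by
  rw [re_add_nat]
  have : (0:ℝ) ≤ n := Nat.cast_nonneg n
  linarith

lemma Gamma_rec_nat {x : ℂ} (hx : 0 < x.re) (n : ℕ) :
    Complex.Gamma (x + ((n+1 : ℕ):ℂ)) = (x + (n:ℂ)) * Complex.Gamma (x + (n:ℂ)) := by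
  rw [show x + ((n+1:ℕ):ℂ) = (x + (n:ℂ)) + 1 by push_cast; ring]
  exact Gamma_rec (re_pos_add hx n)

lemma rec_id (a b c : ℂ) (K : ℕ) (ha : 0 < a.re) (hb : 0 < b.re) (hc : 0 < c.re)
    (hd : ((K:ℝ)+1) < (a+b-c).re) (n : ℕ) :
    Complex.Gamma (a+((n+1:ℕ):ℂ)) * Complex.Gamma (b+((n+1:ℕ):ℂ)) / Complex.Gamma (c+((n+1:ℕ):ℂ)) -
      ∑ m ∈ Finset.range (K+1+1), (-1:ℂ)^m * poch (c-a) m * poch (c-b) m / (m.factorial:ℂ) *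
        Complex.Gamma (a+b-c-(m:ℂ)+((n+1:ℕ):ℂ))
    = (a+b-c+(n:ℂ)) * (Complex.Gamma (a+(n:ℂ)) * Complex.Gamma (b+(n:ℂ)) / Complex.Gamma (c+(n:ℂ)) -
        ∑ m ∈ Finset.range (K+1+1), (-1:ℂ)^m * poch (c-a) m * poch (c-b) m / (m.factorial:ℂ) *
          Complex.Gamma (a+b-c-(m:ℂ)+(n:ℂ)))
      + (c-a)*(c-b) * (Complex.Gamma (a+(n:ℂ)) * Complex.Gamma (b+(n:ℂ)) / Complex.Gamma (c+1+(n:ℂ)) -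
          ∑ m ∈ Finset.range (K+1), (-1:ℂ)^m * poch (c+1-a) m * poch (c+1-b) m / (m.factorial:ℂ) *
            Complex.Gamma (a+b-(c+1)-(m:ℂ)+(n:ℂ))) := by
  have hre : ∀ m : ℕ, m ≤ K+1 → 0 < (a+b-c-(m:ℂ)).re := by
    intro m hm
    have h2 : (m:ℝ) ≤ (K:ℝ)+1 := by exact_mod_cast hm
    have h3 := hd
    simp only [Complex.sub_re, Complex.add_re, Complex.natCast_re] at h3 ⊢
    linarith
  have hGA := Gamma_rec_nat ha n
  have hGB := Gamma_rec_nat hb n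
  have hGC := Gamma_rec_nat hc n
  have hGC1 : Complex.Gamma (c+1+(n:ℂ)) = (c+(n:ℂ)) * Complex.Gamma (c+(n:ℂ)) := by
    rw [show c+1+(n:ℂ) = (c+(n:ℂ))+1 by ring]
    exact Gamma_rec (re_pos_add hc n)
  have hS : ∑ m ∈ Finset.range (K+1+1), (-1:ℂ)^m * poch (c-a) m * poch (c-b) m / (m.factorial:ℂ) *
        Complex.Gamma (a+b-c-(m:ℂ)+((n+1:ℕ):ℂ))
      = (a+b-c+(n:ℂ)) * ∑ m ∈ Finset.range (K+1+1),
            (-1:ℂ)^m * poch (c-a) m * poch (c-b) m / (m.factorial:ℂ) *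
            Complex.Gamma (a+b-c-(m:ℂ)+(n:ℂ))
        + (c-a)*(c-b) * ∑ m ∈ Finset.range (K+1),
            (-1:ℂ)^m * poch (c+1-a) m * poch (c+1-b) m / (m.factorial:ℂ) *
            Complex.Gamma (a+b-(c+1)-(m:ℂ)+(n:ℂ)) := by
    calc ∑ m ∈ Finset.range (K+1+1), (-1:ℂ)^m * poch (c-a) m * poch (c-b) m / (m.factorial:ℂ) *
            Complex.Gamma (a+b-c-(m:ℂ)+((n+1:ℕ):ℂ))
        = ∑ m ∈ Finset.range (K+1+1),
            ((a+b-c+(n:ℂ)) * ((-1:ℂ)^m * poch (c-a) m * poch (c-b) m / (m.factorial:ℂ) *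
              Complex.Gamma (a+b-c-(m:ℂ)+(n:ℂ)))
            + (-(m:ℂ)) * ((-1:ℂ)^m * poch (c-a) m * poch (c-b) m / (m.factorial:ℂ)) *
              Complex.Gamma (a+b-c-(m:ℂ)+(n:ℂ))) := by
          refine Finset.sum_congr rfl (fun m hm => ?_)
          have hm' : m ≤ K+1 := by
            have := Finset.mem_range.mp hm; omega
          rw [Gamma_rec_nat (hre m hm') n]
          ring
      _ = (a+b-c+(n:ℂ)) * (∑ m ∈ Finset.range (K+1+1),
              (-1:ℂ)^m * poch (c-a) m * poch (c-b) m / (m.factorial:ℂ) *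
              Complex.Gamma (a+b-c-(m:ℂ)+(n:ℂ)))
          + ∑ m ∈ Finset.range (K+1+1),
              (-(m:ℂ)) * ((-1:ℂ)^m * poch (c-a) m * poch (c-b) m / (m.factorial:ℂ)) *
              Complex.Gamma (a+b-c-(m:ℂ)+(n:ℂ)) := by
          rw [Finset.sum_add_distrib, ← Finset.mul_sum]
      _ = (a+b-c+(n:ℂ)) * (∑ m ∈ Finset.range (K+1+1),
              (-1:ℂ)^m * poch (c-a) m * poch (c-b) m / (m.factorial:ℂ) *
              Complex.Gamma (a+b-c-(m:ℂ)+(n:ℂ)))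
          + (c-a)*(c-b) * ∑ m ∈ Finset.range (K+1),
              (-1:ℂ)^m * poch (c+1-a) m * poch (c+1-b) m / (m.factorial:ℂ) *
              Complex.Gamma (a+b-(c+1)-(m:ℂ)+(n:ℂ)) := by
          congr 1
          rw [Finset.sum_range_succ']
          simp only [Nat.cast_zero, neg_zero, zero_mul, add_zero]
          rw [Finset.mul_sum]
          refine Finset.sum_congr rfl (fun i _ => ?_)
          have harg : a+b-(c+1)-(i:ℂ)+(n:ℂ) = a+b-c-((i+1:ℕ):ℂ)+(n:ℂ) := by
            push_cast; ring
          have hcs := coef_step c a b i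
          calc (-((i+1:ℕ):ℂ)) * ((-1:ℂ)^(i+1) * poch (c-a) (i+1) * poch (c-b) (i+1) / (((i+1).factorial:ℂ))) *
                Complex.Gamma (a+b-c-((i+1:ℕ):ℂ)+(n:ℂ))
              = (-((i:ℂ)+1) * ((-1:ℂ)^(i+1) * poch (c-a) (i+1) * poch (c-b) (i+1) / (((i+1).factorial:ℂ)))) *
                Complex.Gamma (a+b-c-((i+1:ℕ):ℂ)+(n:ℂ)) := by push_cast; ring
            _ = ((c-a)*(c-b) * ((-1:ℂ)^i * poch (c+1-a) i * poch (c+1-b) i / ((i.factorial:ℂ)))) *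
                Complex.Gamma (a+b-c-((i+1:ℕ):ℂ)+(n:ℂ)) := by rw [hcs]
            _ = (c-a)*(c-b) * ((-1:ℂ)^i * poch (c+1-a) i * poch (c+1-b) i / ((i.factorial:ℂ)) *
                Complex.Gamma (a+b-(c+1)-(i:ℂ)+(n:ℂ))) := by rw [harg]; ring
  rw [hGA, hGB, hGC, hGC1, hS]
  have hCne : Complex.Gamma (c+(n:ℂ)) ≠ 0 := gne (re_pos_add hc n)
  have hcn : (c+(n:ℂ)) ≠ 0 := xne (re_pos_add hc n)
  field_simp
  ring

lemma eqB (a b c : ℂ) (n : ℕ) (hn1 : 1 ≤ n)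
    (hPa : (∏ j ∈ Finset.range (n+1), (a + (j:ℂ))) ≠ 0)
    (hPb : (∏ j ∈ Finset.range (n+1), (b + (j:ℂ))) ≠ 0)
    (hPc : (∏ j ∈ Finset.range (n+1), (c + (j:ℂ))) ≠ 0)
    (hPd : (∏ j ∈ Finset.range (n+1), (a+b-c + (j:ℂ))) ≠ 0) :
    Complex.GammaSeq c n * Complex.GammaSeq (a+b-c) n / (Complex.GammaSeq a n * Complex.GammaSeq b n)
      = (∏ j ∈ Finset.range (n+1), (a + (j:ℂ))) * (∏ j ∈ Finset.range (n+1), (b + (j:ℂ)))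
        / ((∏ j ∈ Finset.range (n+1), (c + (j:ℂ))) * (∏ j ∈ Finset.range (n+1), (a+b-c + (j:ℂ)))) := by
  have hn : (n:ℂ) ≠ 0 := by
    have : n ≠ 0 := by omega
    exact_mod_cast this
  have hfac : ((n.factorial:ℂ)) ≠ 0 := by exact_mod_cast n.factorial_ne_zero
  have hpow : (n:ℂ)^c * (n:ℂ)^(a+b-c) = (n:ℂ)^a * (n:ℂ)^b := by
    rw [← cpow_add _ _ hn, ← cpow_add _ _ hn]; congr 1; ring
  have hpa : (n:ℂ)^a ≠ 0 := by
    rw [Ne, cpow_eq_zero_iff]; tauto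
  have hpb : (n:ℂ)^b ≠ 0 := by
    rw [Ne, cpow_eq_zero_iff]; tauto
  rw [Complex.GammaSeq, Complex.GammaSeq, Complex.GammaSeq, Complex.GammaSeq]
  field_simp
  linear_combination hpow

lemma base_limit (a b c : ℂ) (ha : 0 < a.re) (hb : 0 < b.re) (hc : 0 < c.re)
    (hd : 0 < (a+b-c).re) :
    Tendsto (fun n : ℕ => Complex.Gamma (a+(n:ℂ)) * Complex.Gamma (b+(n:ℂ)) /
      (Complex.Gamma (c+(n:ℂ)) * Complex.Gamma (a+b-c+(n:ℂ)))) atTop (𝓝 1) := by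
  set d := a + b - c with hd_def
  have hPne : ∀ (z:ℂ), 0 < z.re → ∀ n : ℕ, (∏ j ∈ Finset.range (n+1), (z + (j:ℂ))) ≠ 0 := by
    intro z hz n
    refine Finset.prod_ne_zero_iff.mpr (fun j _ => ?_)
    intro h
    have : (z + (j:ℂ)).re = 0 := by rw [h]; simp
    simp only [Complex.add_re, Complex.natCast_re] at this
    have : (0:ℝ) ≤ j := Nat.cast_nonneg j
    nlinarith [Nat.cast_nonneg (α := ℝ) j, hz]
  have T1 : Tendsto (fun n => Complex.GammaSeq c n * Complex.GammaSeq d n /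
      (Complex.GammaSeq a n * Complex.GammaSeq b n)) atTop
      (𝓝 (Complex.Gamma c * Complex.Gamma d / (Complex.Gamma a * Complex.Gamma b))) :=
    ((Complex.GammaSeq_tendsto_Gamma c).mul (Complex.GammaSeq_tendsto_Gamma d)).div
      ((Complex.GammaSeq_tendsto_Gamma a).mul (Complex.GammaSeq_tendsto_Gamma b))
      (mul_ne_zero (gne ha) (gne hb))
  have T3 : Tendsto (fun n : ℕ => (∏ j ∈ Finset.range (n+1), (a + (j:ℂ))) * (∏ j ∈ Finset.range (n+1), (b + (j:ℂ)))
        / ((∏ j ∈ Finset.range (n+1), (c + (j:ℂ))) * (∏ j ∈ Finset.range (n+1), (d + (j:ℂ))))) atTop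
      (𝓝 (Complex.Gamma c * Complex.Gamma d / (Complex.Gamma a * Complex.Gamma b))) := by
    refine T1.congr' ?_
    filter_upwards [eventually_ge_atTop 1] with n hn
    exact eqB a b c n hn (hPne a ha n) (hPne b hb n) (hPne c hc n) (hPne d hd n)
  have T4 : Tendsto (fun n : ℕ => Complex.Gamma (a+((n+1:ℕ):ℂ)) * Complex.Gamma (b+((n+1:ℕ):ℂ)) /
      (Complex.Gamma (c+((n+1:ℕ):ℂ)) * Complex.Gamma (d+((n+1:ℕ):ℂ)))) atTop (𝓝 1) := by
    have T5 := T3.const_mul (Complex.Gamma a * Complex.Gamma b / (Complex.Gamma c * Complex.Gamma d))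
    have hval : (Complex.Gamma a * Complex.Gamma b / (Complex.Gamma c * Complex.Gamma d)) *
        (Complex.Gamma c * Complex.Gamma d / (Complex.Gamma a * Complex.Gamma b)) = 1 := by
      rw [div_mul_div_comm, mul_comm (Complex.Gamma c * Complex.Gamma d)]
      exact div_self (mul_ne_zero (mul_ne_zero (gne ha) (gne hb)) (mul_ne_zero (gne hc) (gne hd)))
    rw [hval] at T5
    refine T5.congr ?_
    intro n
    rw [Gamma_shift a ha (n+1), Gamma_shift b hb (n+1), Gamma_shift c hc (n+1), Gamma_shift d hd (n+1)]
    field_simp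
  exact (Filter.tendsto_add_atTop_iff_nat 1).mp T4

set_option maxHeartbeats 1000000

theorem core (M : ℕ) : ∀ a b c : ℂ, 1 ≤ a.re → 1 ≤ b.re → 1 ≤ c.re →
    (M:ℝ) + 2 ≤ (a+b-c).re →
    (fun n : ℕ => Complex.Gamma (a + n) * Complex.Gamma (b + n) / Complex.Gamma (c + n) -
      ∑ m ∈ Finset.range (M + 1),
        (-1 : ℂ) ^ m * poch (c - a) m * poch (c - b) m / (m.factorial : ℂ) *
          Complex.Gamma (a + b - c - m + n)) =O[atTop]
      fun n : ℕ => Complex.Gamma (a + b - c - (M + 1) + n) := by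
  induction M with
  | zero =>
    intro a b c ha hb hc hd
    have hd' : 2 ≤ (a+b-c).re := by push_cast at hd; linarith
    have ha' : 0 < a.re := by linarith
    have hb' : 0 < b.re := by linarith
    have hc' : 0 < c.re := by linarith
    have hd0 : 0 < (a+b-c).re := by linarith
    simp only [Finset.sum_range_one, pow_zero, poch_zero, Nat.cast_zero, sub_zero,
      Nat.factorial_zero, Nat.cast_one, one_mul, mul_one, div_one, zero_add]
    set w : ℕ → ℂ := fun n => Complex.Gamma (a+(n:ℂ)) * Complex.Gamma (b+(n:ℂ)) /
      (Complex.Gamma (c+(n:ℂ)) * Complex.Gamma (a+b-c+(n:ℂ))) with hwdef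
    have hw : Tendsto w atTop (𝓝 1) := base_limit a b c ha' hb' hc' hd0
    obtain ⟨B, hB⟩ : ∃ B : ℝ, ∀ n, ‖w n‖ ≤ B := by
      have h := hw.norm
      obtain ⟨B, hB⟩ := h.bddAbove_range
      exact ⟨B, fun n => hB (Set.mem_range_self n)⟩
    have hB0 : 0 ≤ B := le_trans (norm_nonneg _) (hB 0)
    have hstep : ∀ n : ℕ, w (n+1) - w n = w n * ((c-a)*(c-b)) / ((c+(n:ℂ))*(a+b-c+(n:ℂ))) := by
      intro n
      have e1 := Gamma_rec_nat ha' n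
      have e2 := Gamma_rec_nat hb' n
      have e3 := Gamma_rec_nat hc' n
      have e4 := Gamma_rec_nat hd0 n
      simp only [hwdef, e1, e2, e3, e4]
      have n1 : Complex.Gamma (c+(n:ℂ)) ≠ 0 := gne (re_pos_add hc' n)
      have n2 : Complex.Gamma (a+b-c+(n:ℂ)) ≠ 0 := gne (re_pos_add hd0 n)
      have n3 : (c+(n:ℂ)) ≠ 0 := xne (re_pos_add hc' n)
      have n4 : (a+b-c+(n:ℂ)) ≠ 0 := xne (re_pos_add hd0 n)
      field_simp
      ring
    set C1 : ℝ := B * ‖(c-a)*(c-b)‖ with hC1def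
    have hC1 : 0 ≤ C1 := mul_nonneg hB0 (norm_nonneg _)
    have hstepnorm : ∀ n : ℕ, 0 ≤ n → ‖w (n+1) - w n‖ ≤ C1 / ((n:ℝ)+1)^(1+1) := by
      intro n _
      rw [hstep n, norm_div, norm_mul]
      refine div_le_div₀ hC1 ?_ (by positivity) ?_
      · exact mul_le_mul_of_nonneg_right (hB n) (norm_nonneg _)
      · rw [norm_mul]
        have g1 := norm_add_nat_ge hc n
        have g2 := norm_add_nat_ge (le_trans (by norm_num) hd') n
        calc ((n:ℝ)+1)^(1+1) = ((n:ℝ)+1) * ((n:ℝ)+1) := by ring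
          _ ≤ ‖c+(n:ℂ)‖ * ‖a+b-c+(n:ℂ)‖ := by
              refine mul_le_mul g1 g2 (by positivity) (norm_nonneg _)
    have htail := tail_bound w 1 C1 1 0 le_rfl hC1 hstepnorm hw
    have hFn : ∀ n : ℕ, Complex.Gamma (a+(n:ℂ)) * Complex.Gamma (b+(n:ℂ)) / Complex.Gamma (c+(n:ℂ))
        - Complex.Gamma (a+b-c+(n:ℂ)) = (w n - 1) * Complex.Gamma (a+b-c+(n:ℂ)) := by
      intro n
      have n1 : Complex.Gamma (c+(n:ℂ)) ≠ 0 := gne (re_pos_add hc' n)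
      have n2 : Complex.Gamma (a+b-c+(n:ℂ)) ≠ 0 := gne (re_pos_add hd0 n)
      simp only [hwdef]
      field_simp
    have hdm : 0 < (a+b-c-1).re := by
      rw [Complex.sub_re, Complex.one_re]; linarith
    rw [isBigO_iff]
    refine ⟨C1 * (‖a+b-c-1‖+2), ?_⟩
    filter_upwards [eventually_ge_atTop 1] with n hn
    have hn1 : (1:ℝ) ≤ (n:ℝ) := by exact_mod_cast hn
    have hub : ‖Complex.Gamma (a+b-c+(n:ℂ))‖ ≤ (‖a+b-c-1‖+1+(n:ℝ)) * ‖Complex.Gamma (a+b-c-1+(n:ℂ))‖ := by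
      have h := ratio_ub (a+b-c-1) hdm 1 n
      rw [show a+b-c-1+((1:ℕ):ℂ)+(n:ℂ) = a+b-c+(n:ℂ) by push_cast; ring] at h
      simpa using h
    have ht := htail n (Nat.zero_le n) hn
    have hGnn : 0 ≤ ‖Complex.Gamma (a+b-c-1+(n:ℂ))‖ := norm_nonneg _
    have hwt : ‖w n - 1‖ ≤ C1 / (n:ℝ) := by
      have : C1 / (1:ℕ) * (1/(n:ℝ)^1) = C1 / n := by push_cast; field_simp
      rw [← this]; exact ht
    calc ‖Complex.Gamma (a+(n:ℂ)) * Complex.Gamma (b+(n:ℂ)) / Complex.Gamma (c+(n:ℂ))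
        - Complex.Gamma (a+b-c+(n:ℂ))‖
        = ‖w n - 1‖ * ‖Complex.Gamma (a+b-c+(n:ℂ))‖ := by rw [hFn n, norm_mul]
      _ ≤ (C1/(n:ℝ)) * ((‖a+b-c-1‖+1+(n:ℝ)) * ‖Complex.Gamma (a+b-c-1+(n:ℂ))‖) := by
          refine mul_le_mul hwt hub (norm_nonneg _) (by positivity)
      _ ≤ C1 * (‖a+b-c-1‖+2) * ‖Complex.Gamma (a+b-c-1+(n:ℂ))‖ := by
          rw [div_mul_eq_mul_div, div_le_iff₀ (by linarith : (0:ℝ) < (n:ℝ))]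
          have hz : 0 ≤ ‖a+b-c-1‖ := norm_nonneg _
          nlinarith [mul_nonneg (mul_nonneg hC1 hGnn) (mul_nonneg (by linarith : (0:ℝ) ≤ ‖a+b-c-1‖+1) (by linarith : (0:ℝ) ≤ (n:ℝ)-1))]
  | succ M IH =>
    intro a b c ha hb hc hd
    push_cast at hd
    have hM0 : (0:ℝ) ≤ M := Nat.cast_nonneg M
    have ha' : 0 < a.re := by linarith
    have hb' : 0 < b.re := by linarith
    have hc' : 0 < c.re := by linarith
    have hd0 : 0 < (a+b-c).re := by linarith
    have IH1 := IH a b c ha hb hc (by linarith)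
    have hc1 : 1 ≤ (c+1).re := by
      simp only [Complex.add_re, Complex.one_re]; linarith
    have hd2 : (M:ℝ) + 2 ≤ (a+b-(c+1)).re := by
      rw [show a+b-(c+1) = (a+b-c) - 1 by ring, Complex.sub_re, Complex.one_re]; linarith
    have IH2 := IH a b (c+1) ha hb hc1 hd2
    have hdre : (M:ℝ) + 3 ≤ a.re + b.re - c.re := by
      have h := hd
      simp only [Complex.sub_re, Complex.add_re] at h
      linarith
    -- notation
    set R : ℕ → ℂ := fun n => Complex.Gamma (a + n) * Complex.Gamma (b + n) / Complex.Gamma (c + n) -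
      ∑ m ∈ Finset.range (M + 1 + 1),
        (-1 : ℂ) ^ m * poch (c - a) m * poch (c - b) m / (m.factorial : ℂ) *
          Complex.Gamma (a + b - c - m + n) with hRdef
    set E : ℕ → ℂ := fun n => Complex.Gamma (a + n) * Complex.Gamma (b + n) / Complex.Gamma (c + 1 + n) -
      ∑ m ∈ Finset.range (M + 1),
        (-1 : ℂ) ^ m * poch (c + 1 - a) m * poch (c + 1 - b) m / (m.factorial : ℂ) *
          Complex.Gamma (a + b - (c + 1) - m + n) with hEdef
    have hRO : R =O[atTop] fun n : ℕ => Complex.Gamma (a+b-c-((M:ℂ)+1)+(n:ℂ)) := by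
      have h2 := IH1.sub ((isBigO_refl (fun n : ℕ => Complex.Gamma (a+b-c-((M:ℂ)+1)+(n:ℂ))) atTop).const_mul_left
        ((-1 : ℂ) ^ (M+1) * poch (c - a) (M+1) * poch (c - b) (M+1) / ((M+1).factorial : ℂ)))
      refine h2.congr_left ?_
      intro n
      simp only [hRdef, Finset.sum_range_succ]
      push_cast
      ring
    obtain ⟨B1, hB1ev⟩ := hRO.bound
    obtain ⟨B2, hB2ev⟩ := IH2.bound
    rw [eventually_atTop] at hB1ev hB2ev
    obtain ⟨N1, hN1⟩ := hB1ev
    obtain ⟨N2, hN2⟩ := hB2ev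
    set w : ℕ → ℂ := fun n => R n / Complex.Gamma (a+b-c+(n:ℂ)) with hwdef
    have hG : ∀ n : ℕ, Complex.Gamma (a+b-c+(n:ℂ)) ≠ 0 := fun n => gne (re_pos_add hd0 n)
    have hwstep : ∀ n : ℕ, w (n+1) - w n = (c-a)*(c-b) * E n / Complex.Gamma (a+b-c+((n+1:ℕ):ℂ)) := by
      intro n
      have hrec : R (n+1) = (a+b-c+(n:ℂ)) * R n + (c-a)*(c-b) * E n := by
        simp only [hRdef, hEdef]
        exact rec_id a b c M ha' hb' hc' (by linarith) n
      have hGrec : Complex.Gamma (a+b-c+((n+1:ℕ):ℂ)) = (a+b-c+(n:ℂ)) * Complex.Gamma (a+b-c+(n:ℂ)) :=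
        Gamma_rec_nat hd0 n
      have n4 : (a+b-c+(n:ℂ)) ≠ 0 := xne (re_pos_add hd0 n)
      simp only [hwdef]
      rw [hrec, hGrec]
      have n4' : (a+b-c+(n:ℂ)) ≠ 0 := n4
      field_simp [hG n]
      ring
    -- w tends to 0
    have hre1 : 1 ≤ (a+b-c-((M:ℂ)+1)).re := by
      simp only [Complex.sub_re, Complex.add_re, Complex.natCast_re, Complex.one_re]; linarith
    have hwb : ∀ n : ℕ, N1 ≤ n → ‖w n‖ ≤ |B1| / ((n:ℝ)+1)^(M+1) := by
      intro n hn
      have h1 := hN1 n hn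
      have h2 := ratio_lb (a+b-c-((M:ℂ)+1)) hre1 (M+1) n
      rw [show a+b-c-((M:ℂ)+1)+((M+1:ℕ):ℂ)+(n:ℂ) = a+b-c+(n:ℂ) by push_cast; ring] at h2
      have hGp : 0 < ‖Complex.Gamma (a+b-c+(n:ℂ))‖ := norm_pos_iff.mpr (hG n)
      have hwn : ‖w n‖ = ‖R n‖ / ‖Complex.Gamma (a+b-c+(n:ℂ))‖ := by
        simp only [hwdef]; rw [norm_div]
      have hp2 : (0:ℝ) < ((n:ℝ)+1)^(M+1) := by positivity
      rw [hwn, div_le_div_iff₀ hGp hp2]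
      calc ‖R n‖ * ((n:ℝ)+1)^(M+1) ≤ (|B1| * ‖Complex.Gamma (a+b-c-((M:ℂ)+1)+(n:ℂ))‖) * ((n:ℝ)+1)^(M+1) := by
            refine mul_le_mul_of_nonneg_right (le_trans h1 ?_) (by positivity)
            exact mul_le_mul_of_nonneg_right (le_abs_self B1) (norm_nonneg _)
        _ = |B1| * (((n:ℝ)+1)^(M+1) * ‖Complex.Gamma (a+b-c-((M:ℂ)+1)+(n:ℂ))‖) := by ring
        _ ≤ |B1| * ‖Complex.Gamma (a+b-c+(n:ℂ))‖ := mul_le_mul_of_nonneg_left h2 (abs_nonneg B1)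
    have hlim : Tendsto w atTop (𝓝 0) := by
      rw [tendsto_zero_iff_norm_tendsto_zero]
      refine squeeze_zero' (g := fun n : ℕ => |B1| / ((n:ℝ)+1)^(M+1)) ?_ ?_ ?_
      · filter_upwards with n; exact norm_nonneg _
      · filter_upwards [eventually_ge_atTop N1] with n hn
        exact hwb n hn
      · have hbase : Tendsto (fun n : ℕ => ((n:ℝ)+1)^(M+1)) atTop atTop := by
          refine (tendsto_pow_atTop (by omega : M+1 ≠ 0)).comp ?_
          exact tendsto_atTop_add_const_right atTop 1 tendsto_natCast_atTop_atTop
        exact tendsto_const_nhds.div_atTop hbase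
    -- step norm bound
    have hre2 : 1 ≤ (a+b-(c+1)-((M:ℂ)+1)).re := by
      simp only [Complex.sub_re, Complex.add_re, Complex.one_re, Complex.natCast_re]
      linarith
    set C : ℝ := ‖(c-a)*(c-b)‖ * |B2| with hCdef
    have hC0 : 0 ≤ C := mul_nonneg (norm_nonneg _) (abs_nonneg _)
    have hstepnorm : ∀ n : ℕ, N2 ≤ n → ‖w (n+1) - w n‖ ≤ C / ((n:ℝ)+1)^((M+2)+1) := by
      intro n hn
      rw [hwstep n, norm_div, norm_mul]
      have hE := hN2 n hn
      have hE' : ‖E n‖ ≤ |B2| * ‖Complex.Gamma (a+b-(c+1)-((M:ℂ)+1)+(n:ℂ))‖ :=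
        le_trans hE (mul_le_mul_of_nonneg_right (le_abs_self B2) (norm_nonneg _))
      have h2 := ratio_lb (a+b-(c+1)-((M:ℂ)+1)) hre2 (M+3) n
      rw [show a+b-(c+1)-((M:ℂ)+1)+((M+3:ℕ):ℂ)+(n:ℂ) = a+b-c+((n+1:ℕ):ℂ) by push_cast; ring] at h2
      have hGyp : 0 < ‖Complex.Gamma (a+b-(c+1)-((M:ℂ)+1)+(n:ℂ))‖ := by
        refine norm_pos_iff.mpr (gne (re_pos_add (by linarith : 0 < (a+b-(c+1)-((M:ℂ)+1)).re) n))
      have hden : 0 < ((n:ℝ)+1)^(M+3) * ‖Complex.Gamma (a+b-(c+1)-((M:ℂ)+1)+(n:ℂ))‖ := by positivity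
      calc ‖(c-a)*(c-b)‖ * ‖E n‖ / ‖Complex.Gamma (a+b-c+((n+1:ℕ):ℂ))‖
          ≤ ‖(c-a)*(c-b)‖ * (|B2| * ‖Complex.Gamma (a+b-(c+1)-((M:ℂ)+1)+(n:ℂ))‖) /
            (((n:ℝ)+1)^(M+3) * ‖Complex.Gamma (a+b-(c+1)-((M:ℂ)+1)+(n:ℂ))‖) := by
            refine div_le_div₀ (by positivity) ?_ hden h2
            exact mul_le_mul_of_nonneg_left hE' (norm_nonneg _)
        _ = C / ((n:ℝ)+1)^((M+2)+1) := by
            rw [show (M+2)+1 = M+3 by ring, hCdef]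
            rw [show ‖(c-a)*(c-b)‖ * (|B2| * ‖Complex.Gamma (a+b-(c+1)-((M:ℂ)+1)+(n:ℂ))‖)
              = (‖(c-a)*(c-b)‖ * |B2|) * ‖Complex.Gamma (a+b-(c+1)-((M:ℂ)+1)+(n:ℂ))‖ by ring]
            rw [mul_div_mul_right _ _ (ne_of_gt hGyp)]
    have hstepnorm' : ∀ n : ℕ, max N2 1 ≤ n → ‖w (n+1) - w n‖ ≤ C / ((n:ℝ)+1)^((M+2)+1) :=
      fun n hn => hstepnorm n (le_trans (le_max_left _ _) hn)
    have htail := tail_bound w 0 C (M+2) (max N2 1) (by omega) hC0 hstepnorm' hlim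
    -- conclusion
    have hrez : 0 < (a+b-c-((M:ℂ)+1+1)).re := by
      simp only [Complex.sub_re, Complex.add_re, Complex.natCast_re, Complex.one_re]; linarith
    have hgfun : (fun n : ℕ => Complex.Gamma (a+b-c-(((M+1:ℕ):ℂ)+1)+(n:ℂ)))
        = (fun n : ℕ => Complex.Gamma (a+b-c-((M:ℂ)+1+1)+(n:ℂ))) := by
      funext n; congr 1; push_cast; ring
    rw [hgfun]
    rw [isBigO_iff]
    refine ⟨C / ((M:ℝ)+2) * (‖a+b-c-((M:ℂ)+1+1)‖+((M:ℝ)+3))^(M+2), ?_⟩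
    filter_upwards [eventually_ge_atTop (max N2 1), eventually_ge_atTop 1] with n hn hn1
    have hn1' : (1:ℝ) ≤ (n:ℝ) := by exact_mod_cast hn1
    have ht := htail n hn hn1
    rw [sub_zero] at ht
    have hRw : R n = w n * Complex.Gamma (a+b-c+(n:ℂ)) := by
      simp only [hwdef]
      rw [div_mul_cancel₀ _ (hG n)]
    have hub := ratio_ub (a+b-c-((M:ℂ)+1+1)) hrez (M+2) n
    rw [show a+b-c-((M:ℂ)+1+1)+((M+2:ℕ):ℂ)+(n:ℂ) = a+b-c+(n:ℂ) by push_cast; ring] at hub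
    have hzn : 0 ≤ ‖a+b-c-((M:ℂ)+1+1)‖ := norm_nonneg _
    have hpowle : (‖a+b-c-((M:ℂ)+1+1)‖+(M+2:ℕ)+(n:ℝ))^(M+2)
        ≤ ((‖a+b-c-((M:ℂ)+1+1)‖+((M:ℝ)+3)) * (n:ℝ))^(M+2) := by
      refine pow_le_pow_left₀ (by positivity) ?_ _
      push_cast
      nlinarith
    have hCq : 0 ≤ C / ((M:ℝ)+2) := by positivity
    have hgoalarg : (fun n : ℕ => Complex.Gamma (a + b - c - ((M:ℂ)+1+1) + (n:ℂ))) n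
        = Complex.Gamma (a + b - c - ((M:ℂ)+1+1) + (n:ℂ)) := rfl
    calc ‖R n‖ = ‖w n‖ * ‖Complex.Gamma (a+b-c+(n:ℂ))‖ := by rw [hRw, norm_mul]
      _ ≤ (C / ((M:ℝ)+2) * (1/(n:ℝ)^(M+2))) * ((‖a+b-c-((M:ℂ)+1+1)‖+(M+2:ℕ)+(n:ℝ))^(M+2) *
            ‖Complex.Gamma (a+b-c-((M:ℂ)+1+1)+(n:ℂ))‖) := by
          refine mul_le_mul ?_ hub (norm_nonneg _) (by positivity)
          have : C / ((M+2:ℕ):ℝ) * (1/(n:ℝ)^(M+2)) = C / ((M:ℝ)+2) * (1/(n:ℝ)^(M+2)) := by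
            push_cast; ring
          rw [← this]; exact ht
      _ ≤ (C / ((M:ℝ)+2) * (1/(n:ℝ)^(M+2))) * ((((‖a+b-c-((M:ℂ)+1+1)‖+((M:ℝ)+3)) * (n:ℝ))^(M+2)) *
            ‖Complex.Gamma (a+b-c-((M:ℂ)+1+1)+(n:ℂ))‖) := by
          refine mul_le_mul_of_nonneg_left ?_ (by positivity)
          exact mul_le_mul_of_nonneg_right hpowle (norm_nonneg _)
      _ = (C / ((M:ℝ)+2) * (‖a+b-c-((M:ℂ)+1+1)‖+((M:ℝ)+3))^(M+2)) *
            ((1/(n:ℝ)^(M+2)) * (n:ℝ)^(M+2)) * ‖Complex.Gamma (a+b-c-((M:ℂ)+1+1)+(n:ℂ))‖ := by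
          rw [mul_pow]; ring
      _ = (C / ((M:ℝ)+2) * (‖a+b-c-((M:ℂ)+1+1)‖+((M:ℝ)+3))^(M+2)) *
            ‖Complex.Gamma (a+b-c-((M:ℂ)+1+1)+(n:ℂ))‖ := by
          rw [one_div, inv_mul_cancel₀ (by positivity : ((n:ℝ))^(M+2) ≠ 0)]
          ring


lemma shiftO (F G : ℕ → ℂ) (n₀ : ℕ)
    (h : (fun n => F (n + n₀)) =O[atTop] fun n => G (n + n₀)) : F =O[atTop] G := by
  rw [isBigO_iff] at h ⊢
  obtain ⟨C, hC⟩ := h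
  refine ⟨C, ?_⟩
  rw [eventually_atTop] at hC ⊢
  obtain ⟨N, hN⟩ := hC
  refine ⟨N + n₀, fun n hn => ?_⟩
  have h2 := hN (n - n₀) (by omega)
  rwa [Nat.sub_add_cancel (by omega)] at h2


theorem gamma_ratio_expansion_gamma_form (a b c : ℂ) (M : ℕ) :
    (fun n : ℕ => Complex.Gamma (a + n) * Complex.Gamma (b + n) / Complex.Gamma (c + n) -
      ∑ m ∈ Finset.range (M + 1),
        (-1 : ℂ) ^ m * poch (c - a) m * poch (c - b) m / (m.factorial : ℂ) *
          Complex.Gamma (a + b - c - m + n)) =O[atTop]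
      fun n : ℕ => Complex.Gamma (a + b - c - (M + 1) + n) := by
  obtain ⟨n₀, hn₀⟩ := exists_nat_ge (max (max (1 - a.re) (1 - b.re))
    (max (1 - c.re) ((M:ℝ) + 2 - (a+b-c).re)))
  have hA : 1 - a.re ≤ n₀ := le_trans (le_trans (le_max_left _ _) (le_max_left _ _)) hn₀
  have hB : 1 - b.re ≤ n₀ := le_trans (le_trans (le_max_right _ _) (le_max_left _ _)) hn₀
  have hC : 1 - c.re ≤ n₀ := le_trans (le_trans (le_max_left _ _) (le_max_right _ _)) hn₀
  have hD : (M:ℝ) + 2 - (a+b-c).re ≤ n₀ :=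
    le_trans (le_trans (le_max_right _ _) (le_max_right _ _)) hn₀
  have hcore := core M (a+(n₀:ℂ)) (b+(n₀:ℂ)) (c+(n₀:ℂ))
    (by rw [re_add_nat]; linarith)
    (by rw [re_add_nat]; linarith)
    (by rw [re_add_nat]; linarith)
    (by rw [show a+(n₀:ℂ)+(b+(n₀:ℂ))-(c+(n₀:ℂ)) = (a+b-c) + (n₀:ℂ) by ring, re_add_nat]; linarith)
  have e1 : ∀ n : ℕ, a+(n₀:ℂ)+(n:ℂ) = a + ((n+n₀:ℕ):ℂ) := fun n => by push_cast; ring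
  have e2 : ∀ n : ℕ, b+(n₀:ℂ)+(n:ℂ) = b + ((n+n₀:ℕ):ℂ) := fun n => by push_cast; ring
  have e3 : ∀ n : ℕ, c+(n₀:ℂ)+(n:ℂ) = c + ((n+n₀:ℕ):ℂ) := fun n => by push_cast; ring
  have e4 : c+(n₀:ℂ)-(a+(n₀:ℂ)) = c - a := by ring
  have e5 : c+(n₀:ℂ)-(b+(n₀:ℂ)) = c - b := by ring
  have e6 : ∀ (m n : ℕ), a+(n₀:ℂ)+(b+(n₀:ℂ))-(c+(n₀:ℂ))-(m:ℂ)+(n:ℂ)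
      = a+b-c-(m:ℂ)+((n+n₀:ℕ):ℂ) := fun m n => by push_cast; ring
  have e7 : ∀ n : ℕ, a+(n₀:ℂ)+(b+(n₀:ℂ))-(c+(n₀:ℂ))-((M:ℂ)+1)+(n:ℂ)
      = a+b-c-((M:ℂ)+1)+((n+n₀:ℕ):ℂ) := fun n => by push_cast; ring
  simp only [e4, e5, e6, e7, e1, e2, e3] at hcore
  exact shiftO _ _ n₀ hcore
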